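/- For every finite nonempty packing body B ⊆ ℕ, every germ-maximal translation set for B is eventually periodic. -/

import Mathlib

noncomputable def genFun (S : Set ℕ) (q : ℝ) : ℝ := ∑' n : S, q ^ (n : ℕ)

def GermLE (S S' : Set ℕ) : Prop :=
  ∃ ε > (0 : ℝ), ∀ q ∈ Set.Ioo (1 - ε) (1 : ℝ), genFun S q ≤ genFun S' q

/-- `T` is a translation set for `B`: the translates `B + n` (`n ∈ T`) are
pairwise disjoint. -/
def IsTranslationSet (B T : Set ℕ) : Prop :=
  ∀ m ∈ T, ∀ n ∈ T, m ≠ n →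
    ((fun b => b + m) '' B) ∩ ((fun b => b + n) '' B) = ∅

def EventuallyPeriodic (S : Set ℕ) : Prop :=
  ∃ N d : ℕ, 1 ≤ d ∧ ∀ n ≥ N, (n ∈ S ↔ n + d ∈ S)

open scoped Classical

namespace PackingAux

/-! ### Values of infinite binary words -/

noncomputable def wordVal (q : ℝ) (x : ℕ → Bool) : ℝ := ∑' n, if x n then q ^ n else 0

lemma wordVal_summable {q : ℝ} (hq : |q| < 1) (x : ℕ → Bool) :
    Summable (fun n => if x n then q ^ n else 0) := by
  apply Summable.of_norm_bounded (summable_geometric_of_lt_one (abs_nonneg q) hq)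
  intro n
  rcases hx : x n with _|_ <;>
    simp [Real.norm_eq_abs, abs_pow, le_refl, pow_nonneg (abs_nonneg q)]

lemma wordVal_nonneg {q : ℝ} (hq0 : 0 ≤ q) (x : ℕ → Bool) : 0 ≤ wordVal q x := by
  apply tsum_nonneg
  intro n; split
  · positivity
  · exact le_refl 0

lemma wordVal_le {q : ℝ} (hq0 : 0 ≤ q) (hq1 : q < 1) (x : ℕ → Bool) :
    wordVal q x ≤ (1 - q)⁻¹ := by
  have h1 : |q| < 1 := by rw [abs_of_nonneg hq0]; exact hq1
  have h2 : wordVal q x ≤ ∑' n : ℕ, q ^ n := by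
    apply Summable.tsum_le_tsum _ (wordVal_summable h1 x) (summable_geometric_of_lt_one hq0 hq1)
    intro n; split
    · exact le_refl _
    · positivity
  rw [tsum_geometric_of_lt_one hq0 hq1] at h2
  exact h2

lemma wordVal_shift {q : ℝ} (hq : |q| < 1) (x : ℕ → Bool) :
    wordVal q x = (if x 0 then 1 else 0) + q * wordVal q (fun n => x (n + 1)) := by
  have h := Summable.tsum_eq_zero_add (f := fun n => if x n then q ^ n else 0) (wordVal_summable hq x)
  rw [wordVal, h]
  simp only [pow_zero]
  congr 1
  rw [wordVal, ← tsum_mul_left]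
  congr 1; funext n
  rcases hx : x (n + 1) with _|_ <;> simp [hx, pow_succ] <;> ring

lemma wordVal_head {q : ℝ} (hq : |q| < 1) (x : ℕ → Bool) (N : ℕ) :
    wordVal q x = (∑ n ∈ Finset.range N, if x n then q ^ n else 0)
      + q ^ N * wordVal q (fun n => x (n + N)) := by
  induction N with
  | zero => simp
  | succ N ih =>
    rw [ih, Finset.sum_range_succ, wordVal_shift hq (fun n => x (n + N))]
    have h1 : (fun n => x (n + 1 + N)) = (fun n => x (n + (N+1))) := by
      funext n; congr 1; omega
    rw [h1]
    rcases hx : x N with _|_ <;> simp [hx, pow_succ] <;> ring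

def conswd (b : Bool) (x : ℕ → Bool) : ℕ → Bool := fun n => Nat.casesOn n b x

@[simp] lemma conswd_zero (b : Bool) (x : ℕ → Bool) : conswd b x 0 = b := rfl
@[simp] lemma conswd_succ (b : Bool) (x : ℕ → Bool) (n : ℕ) : conswd b x (n + 1) = x n := rfl

lemma wordVal_cons {q : ℝ} (hq : |q| < 1) (b : Bool) (x : ℕ → Bool) :
    wordVal q (conswd b x) = (if b then 1 else 0) + q * wordVal q x := by
  rw [wordVal_shift hq (conswd b x)]
  cases b <;> simp

lemma wordVal_false (q : ℝ) : wordVal q (fun _ => false) = 0 := by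
  simp [wordVal]

/-! ### Eventually periodic words and polynomial identities -/

lemma wordVal_periodic {q : ℝ} (hq0 : 0 ≤ q) (hq1 : q < 1) (x : ℕ → Bool) {d : ℕ}
    (hper : ∀ n, x (n + d) = x n) :
    wordVal q x * (1 - q ^ d) = ∑ k ∈ Finset.range d, if x k then q ^ k else 0 := by
  have hq : |q| < 1 := by rw [abs_of_nonneg hq0]; exact hq1
  have h := wordVal_head hq x d
  have hx : (fun n => x (n + d)) = x := funext hper
  rw [hx] at h
  nlinarith [h]

noncomputable def epPoly (x : ℕ → Bool) (N d : ℕ) : Polynomial ℝ :=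
  (∑ n ∈ Finset.range N, if x n then (Polynomial.X : Polynomial ℝ) ^ n else 0) *
      (1 - Polynomial.X ^ d)
    + Polynomial.X ^ N *
      (∑ k ∈ Finset.range d, if x (k + N) then (Polynomial.X : Polynomial ℝ) ^ k else 0)

lemma wordVal_ep {q : ℝ} (hq0 : 0 ≤ q) (hq1 : q < 1) (x : ℕ → Bool) {N d : ℕ}
    (hd : 0 < d) (hper : ∀ n, N ≤ n → x (n + d) = x n) :
    wordVal q x * (1 - q ^ d) = (epPoly x N d).eval q := by
  have hq : |q| < 1 := by rw [abs_of_nonneg hq0]; exact hq1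
  have h := wordVal_head hq x N
  have hper' : ∀ n, (fun m => x (m + N)) (n + d) = (fun m => x (m + N)) n := by
    intro n; dsimp only
    have h2 : n + d + N = (n + N) + d := by omega
    rw [h2, hper _ (by omega)]
  have h2 := wordVal_periodic hq0 hq1 (fun m => x (m + N)) hper'
  have heval : (epPoly x N d).eval q =
      (∑ n ∈ Finset.range N, if x n then q ^ n else 0) * (1 - q ^ d)
        + q ^ N * (∑ k ∈ Finset.range d, if x (k + N) then q ^ k else 0) := by
    simp [epPoly, Polynomial.eval_finset_sum, apply_ite (Polynomial.eval q)]
  rw [heval, ← h2, h]; ring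

lemma ep_period_mul (x : ℕ → Bool) {N d : ℕ} (hper : ∀ n, N ≤ n → x (n + d) = x n)
    (k : ℕ) : ∀ n, N ≤ n → x (n + d * k) = x n := by
  intro n hn
  induction k with
  | zero => simp
  | succ k ih =>
    have h1 : n + d * (k + 1) = (n + d * k) + d := by ring
    rw [h1, hper _ (by omega), ih]

lemma sign_constant_of_no_root {G : Polynomial ℝ} {q0 : ℝ}
    (hnr : ∀ r ∈ Set.Ioo q0 (1:ℝ), ¬ G.IsRoot r) :
    (∀ q ∈ Set.Ioo q0 (1:ℝ), 0 < G.eval q) ∨ (∀ q ∈ Set.Ioo q0 (1:ℝ), G.eval q < 0) := by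
  by_contra hc
  push_neg at hc
  obtain ⟨⟨a, ha, ha2⟩, ⟨b, hb, hb2⟩⟩ := hc
  have ha3 : G.eval a < 0 := lt_of_le_of_ne ha2 (fun h => hnr a ha h)
  have hb3 : 0 < G.eval b := lt_of_le_of_ne hb2 (fun h => hnr b hb h.symm)
  have hco : ∀ u v : ℝ, ContinuousOn (G.eval ·) (Set.Icc u v) :=
    fun u v => (Polynomial.continuous G).continuousOn
  rcases le_total a b with hab | hab
  · obtain ⟨c, hc1, hc2⟩ := intermediate_value_Icc hab (hco a b)
      (Set.mem_Icc.mpr ⟨le_of_lt ha3, le_of_lt hb3⟩)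
    exact hnr c ⟨lt_of_lt_of_le ha.1 hc1.1, lt_of_le_of_lt hc1.2 hb.2⟩ hc2
  · obtain ⟨c, hc1, hc2⟩ := intermediate_value_Icc' hab (hco b a)
      (Set.mem_Icc.mpr ⟨le_of_lt ha3, le_of_lt hb3⟩)
    exact hnr c ⟨lt_of_lt_of_le hb.1 hc1.1, lt_of_le_of_lt hc1.2 ha.2⟩ hc2

lemma exists_no_root_interval (G : Polynomial ℝ) (hG : G ≠ 0) :
    ∃ q0 : ℝ, 1/2 ≤ q0 ∧ q0 < 1 ∧ ∀ r ∈ Set.Ioo q0 (1:ℝ), ¬ G.IsRoot r := by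
  have hfin : Set.Finite {r : ℝ | G.IsRoot r} := Polynomial.finite_setOf_isRoot hG
  set s := hfin.toFinset.filter (fun r => 1/2 ≤ r ∧ r < 1) with hs
  rcases Finset.eq_empty_or_nonempty s with he | hne
  · refine ⟨1/2, le_refl _, by norm_num, fun r hr hroot => ?_⟩
    have : r ∈ s := by
      simp only [hs, Finset.mem_filter]
      exact ⟨hfin.mem_toFinset.mpr hroot, le_of_lt hr.1, hr.2⟩
    rw [he] at this; exact absurd this (Finset.notMem_empty r)
  · refine ⟨s.max' hne, ?_, ?_, ?_⟩
    · have := s.max'_mem hne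
      simp only [hs, Finset.mem_filter] at this
      exact this.2.1
    · have := s.max'_mem hne
      simp only [hs, Finset.mem_filter] at this
      exact this.2.2
    · intro r hr hroot
      have h12 : (1:ℝ)/2 ≤ r := by
        have := s.max'_mem hne
        simp only [hs, Finset.mem_filter] at this
        exact le_of_lt (lt_of_le_of_lt this.2.1 hr.1)
      have hrs : r ∈ s := by
        simp only [hs, Finset.mem_filter]
        exact ⟨hfin.mem_toFinset.mpr hroot, h12, hr.2⟩
      exact absurd (s.le_max' r hrs) (not_le.mpr hr.1)

lemma ep_trichotomy (x y : ℕ → Bool) {Nx dx Ny dy : ℕ} (hdx : 0 < dx) (hdy : 0 < dy)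
    (hx : ∀ n, Nx ≤ n → x (n + dx) = x n) (hy : ∀ n, Ny ≤ n → y (n + dy) = y n) :
    ∃ q0 : ℝ, 1/2 ≤ q0 ∧ q0 < 1 ∧
      ((∀ q ∈ Set.Ioo q0 1, wordVal q x < wordVal q y) ∨
       (∀ q ∈ Set.Ioo q0 1, wordVal q x = wordVal q y) ∨
       (∀ q ∈ Set.Ioo q0 1, wordVal q y < wordVal q x)) := by
  set d := dx * dy with hd
  have hd0 : 0 < d := Nat.mul_pos hdx hdy
  set N := max Nx Ny with hN
  have hx' : ∀ n, N ≤ n → x (n + d) = x n := fun n hn =>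
    ep_period_mul x hx dy n (le_trans (le_max_left _ _) hn)
  have hy' : ∀ n, N ≤ n → y (n + d) = y n := by
    intro n hn
    have h1 : d = dy * dx := by rw [hd]; ring
    rw [h1]
    exact ep_period_mul y hy dx n (le_trans (le_max_right _ _) hn)
  set G := epPoly x N d - epPoly y N d with hG
  have key : ∀ q : ℝ, 0 ≤ q → q < 1 →
      (wordVal q x - wordVal q y) * (1 - q ^ d) = G.eval q := by
    intro q h0 h1
    rw [hG, Polynomial.eval_sub, ← wordVal_ep h0 h1 x hd0 hx', ← wordVal_ep h0 h1 y hd0 hy']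
    ring
  have hpow : ∀ q : ℝ, 0 ≤ q → q < 1 → 0 < 1 - q ^ d := by
    intro q h0 h1
    have : q ^ d < 1 := pow_lt_one₀ h0 h1 (by omega)
    linarith
  rcases eq_or_ne G 0 with hG0 | hG0
  · refine ⟨1/2, le_refl _, by norm_num, Or.inr (Or.inl ?_)⟩
    intro q hq
    have h0 : (0:ℝ) ≤ q := by have := hq.1; linarith
    have h2 := key q h0 hq.2
    rw [hG0] at h2
    simp only [Polynomial.eval_zero] at h2
    nlinarith [hpow q h0 hq.2]
  · obtain ⟨q0, hq01, hq02, hnr⟩ := exists_no_root_interval G hG0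
    refine ⟨q0, hq01, hq02, ?_⟩
    rcases sign_constant_of_no_root hnr with hpos | hneg
    · refine Or.inr (Or.inr ?_)
      intro q hq
      have h0 : (0:ℝ) ≤ q := by have := hq.1; linarith
      nlinarith [key q h0 hq.2, hpow q h0 hq.2, hpos q hq]
    · refine Or.inl ?_
      intro q hq
      have h0 : (0:ℝ) ≤ q := by have := hq.1; linarith
      nlinarith [key q h0 hq.2, hpow q h0 hq.2, hneg q hq]

/-! ### The window state machine -/

abbrev StW (W : ℕ) := Fin (W + 1) → Bool

def push (W : ℕ) (b : Bool) (s : StW W) : StW W := fun i => i.cases b (fun j => s j.castSucc)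

@[simp] lemma push_zero (W : ℕ) (b : Bool) (s : StW W) : push W b s 0 = b := rfl

@[simp] lemma push_succ (W : ℕ) (b : Bool) (s : StW W) (j : Fin W) :
    push W b s j.succ = s j.castSucc := by simp [push]

def canPut (F : Finset ℕ) (W : ℕ) (s : StW W) : Prop :=
  ∀ i : Fin (W + 1), s i = true → ((i : ℕ) + 1) ∉ F

def ValidFrom (F : Finset ℕ) (W : ℕ) (s : StW W) (x : ℕ → Bool) : Prop :=
  (∀ m d, d ∈ F → x m = true → x (m + d) = true → False) ∧
  (∀ m (i : Fin (W + 1)), x m = true → s i = true → (m + 1 + (i : ℕ)) ∈ F → False)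

lemma validFrom_cons (F : Finset ℕ) (W : ℕ) (hF : ∀ d ∈ F, 0 < d ∧ d ≤ W + 1)
    (s : StW W) (x : ℕ → Bool) (b : Bool) :
    ValidFrom F W s (conswd b x) ↔
      ((b = true → canPut F W s) ∧ ValidFrom F W (push W b s) x) := by
  constructor
  · rintro ⟨h1, h2⟩
    refine ⟨?_, ?_, ?_⟩
    · intro hb i hsi hmem
      refine h2 0 i hb hsi ?_
      rw [show (0:ℕ) + 1 + (i:ℕ) = (i:ℕ) + 1 from by omega]
      exact hmem
    · intro m d hd hm hmd
      refine h1 (m + 1) d hd (by simpa using hm) ?_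
      rw [show m + 1 + d = (m + d) + 1 from by omega]
      simpa using hmd
    · intro m i hm hpi hmem
      induction i using Fin.cases with
      | zero =>
        simp only [push_zero] at hpi
        refine h1 0 (m + 1) ?_ hpi ?_
        · rw [show m + 1 + ((0 : Fin (W+1)) : ℕ) = m + 1 from by simp] at hmem
          exact hmem
        · rw [show (0:ℕ) + (m + 1) = m + 1 from by omega]
          simpa using hm
      | succ j =>
        simp only [push_succ] at hpi
        refine h2 (m + 1) j.castSucc (by simpa using hm) hpi ?_
        rw [show (m + 1) + 1 + (j.castSucc : ℕ) = m + 1 + ((j.succ : Fin (W+1)) : ℕ) from by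
          simp [Fin.coe_castSucc, Fin.val_succ]; omega]
        exact hmem
  · rintro ⟨hok, hv1, hv2⟩
    constructor
    · intro m d hd hm hmd
      match m with
      | 0 =>
        have hd1 : 0 < d ∧ d ≤ W + 1 := hF d hd
        have hb : b = true := hm
        have hxd : x (d - 1) = true := by
          rw [show (0:ℕ) + d = (d - 1) + 1 from by omega] at hmd
          simpa using hmd
        refine hv2 (d - 1) 0 hxd (by simp [hb]) ?_
        rw [show d - 1 + 1 + ((0 : Fin (W+1)) : ℕ) = d from by simp; omega]
        exact hd
      | m' + 1 =>
        refine hv1 m' d hd (by simpa using hm) ?_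
        rw [show m' + d = (m' + 1 + d) - 1 from by omega]
        rw [show m' + 1 + d = (m' + d) + 1 from by omega] at hmd
        simpa using hmd
    · intro m i hm hsi hmem
      match m with
      | 0 =>
        have hb : b = true := hm
        refine hok hb i hsi ?_
        rw [show (i:ℕ) + 1 = 0 + 1 + (i:ℕ) from by omega]
        exact hmem
      | m' + 1 =>
        by_cases hi : (i : ℕ) < W
        · set j : Fin W := ⟨(i : ℕ), hi⟩ with hj
          have hji : j.castSucc = i := Fin.ext (by simp [hj])
          have hps : push W b s j.succ = s i := by
            rw [push_succ, hji]
          refine hv2 m' j.succ (by simpa using hm) (by rw [hps]; exact hsi) ?_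
          rw [show m' + 1 + ((j.succ : Fin (W+1)) : ℕ) = m' + 1 + 1 + (i:ℕ) from by
            simp [Fin.val_succ, hj] <;> omega]
          exact hmem
        · exfalso
          have hiW : (i : ℕ) = W := by omega
          have := (hF _ hmem).2
          omega

lemma validFrom_decompose (F : Finset ℕ) (W : ℕ) (hF : ∀ d ∈ F, 0 < d ∧ d ≤ W + 1)
    (s : StW W) (x : ℕ → Bool) (h : ValidFrom F W s x) :
    (x 0 = true → canPut F W s) ∧ ValidFrom F W (push W (x 0) s) (fun n => x (n + 1)) := by
  have hx : x = conswd (x 0) (fun n => x (n + 1)) := by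
    funext n; match n with
    | 0 => rfl
    | n + 1 => rfl
  rw [hx] at h
  exact (validFrom_cons F W hF s _ _).mp h

lemma validFrom_false (F : Finset ℕ) (W : ℕ) (s : StW W) :
    ValidFrom F W s (fun _ => false) := by
  constructor
  · intro m d _ hm _; simp at hm
  · intro m i hm _ _; simp at hm

def VSet (F : Finset ℕ) (W : ℕ) (q : ℝ) (s : StW W) : Set ℝ :=
  {v | ∃ x, ValidFrom F W s x ∧ wordVal q x = v}

noncomputable def V (F : Finset ℕ) (W : ℕ) (q : ℝ) (s : StW W) : ℝ := sSup (VSet F W q s)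

lemma VSet_nonempty (F : Finset ℕ) (W : ℕ) (q : ℝ) (s : StW W) : (VSet F W q s).Nonempty :=
  ⟨wordVal q (fun _ => false), ⟨_, validFrom_false F W s, rfl⟩⟩

lemma VSet_bddAbove (F : Finset ℕ) (W : ℕ) {q : ℝ} (hq0 : 0 ≤ q) (hq1 : q < 1) (s : StW W) :
    BddAbove (VSet F W q s) := by
  refine ⟨(1 - q)⁻¹, ?_⟩
  rintro v ⟨x, _, rfl⟩
  exact wordVal_le hq0 hq1 x

lemma wordVal_le_V (F : Finset ℕ) (W : ℕ) {q : ℝ} (hq0 : 0 ≤ q) (hq1 : q < 1) {s : StW W}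
    {x : ℕ → Bool} (h : ValidFrom F W s x) : wordVal q x ≤ V F W q s :=
  le_csSup (VSet_bddAbove F W hq0 hq1 s) ⟨x, h, rfl⟩

lemma V_nonneg (F : Finset ℕ) (W : ℕ) {q : ℝ} (hq0 : 0 ≤ q) (hq1 : q < 1) (s : StW W) :
    0 ≤ V F W q s := by
  have := wordVal_le_V F W hq0 hq1 (validFrom_false F W s)
  rwa [wordVal_false] at this

lemma V_le (F : Finset ℕ) (W : ℕ) {q : ℝ} (hq0 : 0 ≤ q) (hq1 : q < 1) (s : StW W) :
    V F W q s ≤ (1 - q)⁻¹ :=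
  csSup_le (VSet_nonempty F W q s) (by rintro v ⟨x, _, rfl⟩; exact wordVal_le hq0 hq1 x)

noncomputable def stepVal (F : Finset ℕ) (W : ℕ) (q : ℝ) (s : StW W) (b : Bool) : ℝ :=
  (if b then 1 else 0) + q * V F W q (push W b s)

lemma stepVal_le_V (F : Finset ℕ) (W : ℕ) (hF : ∀ d ∈ F, 0 < d ∧ d ≤ W + 1) {q : ℝ}
    (hq0 : 0 ≤ q) (hq1 : q < 1) (s : StW W) (b : Bool) (hok : b = true → canPut F W s) :
    stepVal F W q s b ≤ V F W q s := by
  have hq : |q| < 1 := by rw [abs_of_nonneg hq0]; exact hq1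
  have hmem : ∀ v ∈ VSet F W q (push W b s),
      (if b then (1:ℝ) else 0) + q * v ∈ VSet F W q s := by
    rintro v ⟨x, hx, rfl⟩
    refine ⟨conswd b x, ?_, wordVal_cons hq b x⟩
    exact (validFrom_cons F W hF s x b).mpr ⟨hok, hx⟩
  rcases eq_or_lt_of_le hq0 with hq0' | hq0'
  · have hv : ValidFrom F W s (conswd b (fun _ => false)) :=
      (validFrom_cons F W hF s _ b).mpr ⟨hok, validFrom_false F W _⟩
    have h1 := wordVal_le_V F W hq0 hq1 hv
    rw [wordVal_cons hq b _, wordVal_false] at h1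
    subst hq0'
    unfold stepVal
    simp only [zero_mul, add_zero, mul_zero] at h1 ⊢
    exact h1
  · apply le_of_forall_pos_le_add
    intro ε hε
    obtain ⟨v, hv, hvlt⟩ := exists_lt_of_lt_csSup (VSet_nonempty F W q (push W b s))
      (show V F W q (push W b s) - ε / q < V F W q (push W b s) by
        have : 0 < ε / q := div_pos hε hq0'
        linarith)
    have h1 : (if b then (1:ℝ) else 0) + q * v ≤ V F W q s :=
      le_csSup (VSet_bddAbove F W hq0 hq1 s) (hmem v hv)
    have h2 : q * V F W q (push W b s) < q * v + ε := by
      have h3 := mul_lt_mul_of_pos_left hvlt hq0'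
      rw [mul_sub] at h3
      have hqq : q * (ε / q) = ε := by field_simp
      linarith
    unfold stepVal
    nlinarith

noncomputable def greedy (F : Finset ℕ) (W : ℕ) (q : ℝ) : StW W → Bool := fun s =>
  decide (canPut F W s) &&
    decide (q * V F W q (push W false s) ≤ 1 + q * V F W q (push W true s))

noncomputable def act (F : Finset ℕ) (W : ℕ) (π : StW W → Bool) (s : StW W) : Bool :=
  π s && decide (canPut F W s)

lemma act_ok (F : Finset ℕ) (W : ℕ) (π : StW W → Bool) (s : StW W) :
    act F W π s = true → canPut F W s := by
  intro h
  simp only [act, Bool.and_eq_true, decide_eq_true_eq] at h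
  exact h.2

lemma greedy_eq (F : Finset ℕ) (W : ℕ) (hF : ∀ d ∈ F, 0 < d ∧ d ≤ W + 1) {q : ℝ}
    (hq0 : 0 ≤ q) (hq1 : q < 1) (s : StW W) :
    V F W q s = stepVal F W q s (act F W (greedy F W q) s) := by
  have hq : |q| < 1 := by rw [abs_of_nonneg hq0]; exact hq1
  apply le_antisymm
  · apply csSup_le (VSet_nonempty F W q s)
    rintro v ⟨x, hx, rfl⟩
    obtain ⟨hok, hx'⟩ := validFrom_decompose F W hF s x hx
    have h1 : wordVal q x
        = (if x 0 then (1:ℝ) else 0) + q * wordVal q (fun n => x (n + 1)) := by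
      have hcons : x = conswd (x 0) (fun n => x (n + 1)) := by
        funext n; match n with
        | 0 => rfl
        | n + 1 => rfl
      conv_lhs => rw [hcons]
      exact wordVal_cons hq _ _
    have h2 : wordVal q x ≤ stepVal F W q s (x 0) := by
      rw [h1]
      unfold stepVal
      have h3 := wordVal_le_V F W hq0 hq1 hx'
      nlinarith
    refine le_trans h2 ?_
    rcases hx0 : x 0 with _|_ <;> rw [hx0] at h2 hok
    · rcases hg : act F W (greedy F W q) s with _|_
      · exact le_refl _
      · have hcmp : q * V F W q (push W false s) ≤ 1 + q * V F W q (push W true s) := by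
          simp only [act, greedy, Bool.and_eq_true, decide_eq_true_eq] at hg
          exact hg.1.2
        simpa [stepVal] using hcmp
    · have hcp : canPut F W s := hok rfl
      rcases hcmp : decide (q * V F W q (push W false s) ≤ 1 + q * V F W q (push W true s))
        with _|_
      · have hg : act F W (greedy F W q) s = false := by
          simp only [act, greedy]
          rw [hcmp]
          simp
        rw [hg]
        have hn : ¬ (q * V F W q (push W false s) ≤ 1 + q * V F W q (push W true s)) := by
          simpa using hcmp
        have hlt := le_of_not_ge hn
        simpa [stepVal] using hlt
      · have hg : act F W (greedy F W q) s = true := by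
          simp only [act, greedy]
          rw [hcmp]
          simp [hcp]
        rw [hg]
  · exact stepVal_le_V F W hF hq0 hq1 s _ (act_ok F W _ _)

/-! ### Runs of policies -/

def sInit (W : ℕ) : StW W := fun _ => false

lemma validFrom_sInit_iff (F : Finset ℕ) (W : ℕ) (x : ℕ → Bool) :
    ValidFrom F W (sInit W) x ↔
      (∀ m d, d ∈ F → x m = true → x (m + d) = true → False) := by
  constructor
  · exact fun h => h.1
  · intro h
    refine ⟨h, ?_⟩
    intro m i _ hsi _
    simp [sInit] at hsi

noncomputable def stepS (F : Finset ℕ) (W : ℕ) (π : StW W → Bool) (s : StW W) : StW W :=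
  push W (act F W π s) s

noncomputable def runS (F : Finset ℕ) (W : ℕ) (π : StW W → Bool) : ℕ → StW W :=
  fun n => (stepS F W π)^[n] (sInit W)

noncomputable def runW (F : Finset ℕ) (W : ℕ) (π : StW W → Bool) : ℕ → Bool :=
  fun n => act F W π (runS F W π n)

lemma runS_zero (F : Finset ℕ) (W : ℕ) (π : StW W → Bool) : runS F W π 0 = sInit W := rfl

lemma runS_succ (F : Finset ℕ) (W : ℕ) (π : StW W → Bool) (n : ℕ) :
    runS F W π (n + 1) = stepS F W π (runS F W π n) := Function.iterate_succ_apply' _ _ _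

lemma runS_succ' (F : Finset ℕ) (W : ℕ) (π : StW W → Bool) (n : ℕ) :
    runS F W π (n + 1) = push W (runW F W π n) (runS F W π n) := runS_succ F W π n

lemma V_partial (F : Finset ℕ) (W : ℕ) (hF : ∀ d ∈ F, 0 < d ∧ d ≤ W + 1) {q : ℝ}
    (hq0 : 0 ≤ q) (hq1 : q < 1) (N : ℕ) :
    V F W q (sInit W)
      = (∑ n ∈ Finset.range N, if runW F W (greedy F W q) n then q ^ n else 0)
        + q ^ N * V F W q (runS F W (greedy F W q) N) := by
  induction N with
  | zero => simp [runS_zero]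
  | succ N ih =>
    rw [Finset.sum_range_succ, ih, greedy_eq F W hF hq0 hq1 (runS F W (greedy F W q) N)]
    unfold stepVal
    rw [show act F W (greedy F W q) (runS F W (greedy F W q) N) = runW F W (greedy F W q) N
      from rfl]
    rw [← runS_succ' F W (greedy F W q) N]
    rcases hb : runW F W (greedy F W q) N with _|_ <;> simp [hb] <;> ring

lemma V_eq_run (F : Finset ℕ) (W : ℕ) (hF : ∀ d ∈ F, 0 < d ∧ d ≤ W + 1) {q : ℝ}
    (hq0 : 0 ≤ q) (hq1 : q < 1) :
    V F W q (sInit W) = wordVal q (runW F W (greedy F W q)) := by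
  have hq : |q| < 1 := by rw [abs_of_nonneg hq0]; exact hq1
  set x := runW F W (greedy F W q) with hx
  set dd := V F W q (sInit W) - wordVal q x with hd
  have hbound : ∀ N : ℕ, |dd| ≤ q ^ N * (1 - q)⁻¹ := by
    intro N
    have h1 := V_partial F W hF hq0 hq1 N
    have h2 := wordVal_head hq x N
    have h3 : dd = q ^ N * (V F W q (runS F W (greedy F W q) N)
        - wordVal q (fun n => x (n + N))) := by
      rw [hd, h1, h2]; ring
    rw [h3, abs_mul, abs_of_nonneg (pow_nonneg hq0 N)]
    apply mul_le_mul_of_nonneg_left _ (pow_nonneg hq0 N)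
    rw [abs_le]
    constructor
    · have h4 := V_nonneg F W hq0 hq1 (runS F W (greedy F W q) N)
      have h5 := wordVal_le hq0 hq1 (fun n => x (n + N))
      linarith
    · have h4 := V_le F W hq0 hq1 (runS F W (greedy F W q) N)
      have h5 := wordVal_nonneg hq0 (fun n => x (n + N))
      linarith
  have htend : Filter.Tendsto (fun N : ℕ => q ^ N * (1 - q)⁻¹) Filter.atTop (nhds 0) := by
    have h := tendsto_pow_atTop_nhds_zero_of_lt_one hq0 hq1
    simpa using h.mul_const ((1 - q)⁻¹)
  have habs : |dd| ≤ 0 :=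
    le_of_tendsto_of_tendsto' tendsto_const_nhds htend hbound
  have : dd = 0 := abs_eq_zero.mp (le_antisymm habs (abs_nonneg dd))
  rw [hd] at this
  linarith

lemma runS_eq (F : Finset ℕ) (W : ℕ) (π : StW W → Bool) : ∀ (n : ℕ) (i : Fin (W+1)),
    runS F W π n i = if (i : ℕ) < n then runW F W π (n - 1 - (i:ℕ)) else false := by
  intro n
  induction n with
  | zero => intro i; simp [runS_zero, sInit]
  | succ n ih =>
    intro i
    rw [runS_succ' F W π n]
    induction i using Fin.cases with
    | zero =>
      rw [push_zero]
      simp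
    | succ j =>
      rw [push_succ, ih j.castSucc]
      have h1 : ((j.castSucc : Fin (W+1)) : ℕ) = (j : ℕ) := by simp
      have h2 : ((j.succ : Fin (W+1)) : ℕ) = (j : ℕ) + 1 := by simp
      rw [h1, h2]
      by_cases hc : (j : ℕ) < n
      · rw [if_pos hc, if_pos (by omega)]
        congr 1
        omega
      · rw [if_neg hc, if_neg (by omega)]

lemma valid_run (F : Finset ℕ) (W : ℕ) (hF : ∀ d ∈ F, 0 < d ∧ d ≤ W + 1)
    (π : StW W → Bool) : ValidFrom F W (sInit W) (runW F W π) := by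
  rw [validFrom_sInit_iff]
  intro m dd hdd hm hmd
  have h1 : canPut F W (runS F W π (m + dd)) := act_ok F W π _ hmd
  have hdb := hF dd hdd
  have hi : dd - 1 < W + 1 := by omega
  have h2 : runS F W π (m + dd) ⟨dd - 1, hi⟩ = true := by
    rw [runS_eq F W π (m + dd) ⟨dd - 1, hi⟩]
    have hlt : ((⟨dd - 1, hi⟩ : Fin (W+1)) : ℕ) < m + dd := by simp; omega
    rw [if_pos hlt]
    have he : m + dd - 1 - ((⟨dd - 1, hi⟩ : Fin (W+1)) : ℕ) = m := by simp; omega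
    rw [he]; exact hm
  have h3 := h1 _ h2
  apply h3
  have he2 : ((⟨dd - 1, hi⟩ : Fin (W+1)) : ℕ) + 1 = dd := by simp; omega
  rw [he2]; exact hdd

lemma run_ep (F : Finset ℕ) (W : ℕ) (π : StW W → Bool) :
    ∃ N d : ℕ, 0 < d ∧ ∀ n, N ≤ n → runW F W π (n + d) = runW F W π n := by
  have hni : ¬ Function.Injective (runS F W π) := by
    intro h
    exact (Finite.of_injective _ h).false
  rw [Function.not_injective_iff] at hni
  obtain ⟨a, b, hab, hne⟩ := hni
  have key : ∀ a b : ℕ, a < b → runS F W π a = runS F W π b →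
      ∃ N d : ℕ, 0 < d ∧ ∀ n, N ≤ n → runW F W π (n + d) = runW F W π n := by
    intro a b h hab
    set d := b - a with hdd
    have hper : ∀ k, runS F W π (a + d + k) = runS F W π (a + k) := by
      intro k
      induction k with
      | zero =>
        have he : a + d + 0 = b := by omega
        rw [he]
        simpa using hab.symm
      | succ k ihk =>
        have e1 : a + d + (k + 1) = (a + d + k) + 1 := by omega
        have e2 : a + (k + 1) = (a + k) + 1 := by omega
        rw [e1, e2, runS_succ, runS_succ, ihk]
    refine ⟨a, d, by omega, ?_⟩
    intro n hn
    have e3 : n + d = a + d + (n - a) := by omega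
    have e4 : n = a + (n - a) := by omega
    unfold runW
    rw [e3, hper (n - a), ← e4]
  rcases Ne.lt_or_gt hne with h | h
  · exact key a b h hab
  · exact key b a h hab.symm

/-! ### Blackwell-optimal policy -/

lemma exists_blackwell (F : Finset ℕ) (W : ℕ) (hF : ∀ d ∈ F, 0 < d ∧ d ≤ W + 1) :
    ∃ (π : StW W → Bool) (q0 : ℝ), 1/2 ≤ q0 ∧ q0 < 1 ∧
      ∀ q ∈ Set.Ioo q0 (1:ℝ), V F W q (sInit W) = wordVal q (runW F W π) := by
  have htri : ∀ p : (StW W → Bool) × (StW W → Bool), ∃ q0 : ℝ, 1/2 ≤ q0 ∧ q0 < 1 ∧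
      ((∀ q ∈ Set.Ioo q0 1, wordVal q (runW F W p.1) < wordVal q (runW F W p.2)) ∨
       (∀ q ∈ Set.Ioo q0 1, wordVal q (runW F W p.1) = wordVal q (runW F W p.2)) ∨
       (∀ q ∈ Set.Ioo q0 1, wordVal q (runW F W p.2) < wordVal q (runW F W p.1))) := by
    intro p
    obtain ⟨N1, d1, hd1, hp1⟩ := run_ep F W p.1
    obtain ⟨N2, d2, hd2, hp2⟩ := run_ep F W p.2
    exact ep_trichotomy _ _ hd1 hd2 hp1 hp2
  choose f hf1 hf2 hf3 using htri
  set q0 : ℝ := Finset.univ.sup' Finset.univ_nonempty f with hq0def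
  have hfle : ∀ p, f p ≤ q0 := fun p => Finset.le_sup' f (Finset.mem_univ p)
  have hq0half : 1/2 ≤ q0 :=
    le_trans (hf1 default) (hfle default)
  have hq0lt : q0 < 1 := by
    rw [hq0def, Finset.sup'_lt_iff]
    intro p _; exact hf2 p
  set qh : ℝ := (q0 + 1)/2 with hqh
  have hqhIoo : qh ∈ Set.Ioo q0 (1:ℝ) := ⟨by rw [hqh]; linarith, by rw [hqh]; linarith⟩
  have hqh0 : (0:ℝ) ≤ qh := by rw [hqh]; linarith
  have hqh1 : qh < 1 := hqhIoo.2
  refine ⟨greedy F W qh, q0, hq0half, hq0lt, ?_⟩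
  intro q hq
  have hq0' : (0:ℝ) ≤ q := by have := hq.1; linarith
  have hq1' : q < 1 := hq.2
  have hsub : ∀ p, Set.Ioo q0 (1:ℝ) ⊆ Set.Ioo (f p) 1 := by
    intro p r hr
    exact ⟨lt_of_le_of_lt (hfle p) hr.1, hr.2⟩
  apply le_antisymm
  · rw [V_eq_run F W hF hq0' hq1']
    set p : (StW W → Bool) × (StW W → Bool) := (greedy F W q, greedy F W qh) with hp
    rcases hf3 p with hlt | heq | hgt
    · exact le_of_lt (hlt q (hsub p hq))
    · exact le_of_eq (heq q (hsub p hq))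
    · exfalso
      have h1 := hgt qh (hsub p hqhIoo)
      have h2 : wordVal qh (runW F W (greedy F W q)) ≤ V F W qh (sInit W) :=
        wordVal_le_V F W hqh0 hqh1 (valid_run F W hF (greedy F W q))
      have h3 := V_eq_run F W hF hqh0 hqh1
      simp only [hp] at h1
      linarith
  · exact wordVal_le_V F W hq0' hq1' (valid_run F W hF (greedy F W qh))

/-! ### Power-series identity: words with equal values near 1 coincide -/

noncomputable def wdSeries (x : ℕ → Bool) : FormalMultilinearSeries ℝ ℝ ℝ :=
  fun n => if x n then ContinuousMultilinearMap.mkPiAlgebraFin ℝ n ℝ else 0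

lemma wdSeries_norm_le (x : ℕ → Bool) (n : ℕ) : ‖wdSeries x n‖ ≤ 1 := by
  rw [wdSeries]
  rcases hx : x n with _|_ <;>
    simp [hx, ContinuousMultilinearMap.norm_mkPiAlgebraFin]

lemma wdSeries_radius (x : ℕ → Bool) : 1 ≤ (wdSeries x).radius := by
  apply FormalMultilinearSeries.le_radius_of_bound _ 1
  intro n
  rw [NNReal.coe_one, one_pow, mul_one]
  exact wdSeries_norm_le x n

lemma wdSeries_sum (x : ℕ → Bool) {y : ℝ} (hy : |y| < 1) :
    (wdSeries x).sum y = wordVal y x := by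
  rw [FormalMultilinearSeries.sum, wordVal]
  congr 1
  funext n
  rw [wdSeries]
  rcases hx : x n with _|_ <;>
    simp [hx, ContinuousMultilinearMap.mkPiAlgebraFin_apply, List.ofFn_const,
      List.prod_replicate]

lemma hasFPS (x : ℕ → Bool) :
    HasFPowerSeriesOnBall (fun q => wordVal q x) (wdSeries x) 0 1 := by
  have h0 : (0:ENNReal) < 1 := by norm_num
  have h := (wdSeries x).hasFPowerSeriesOnBall (lt_of_lt_of_le h0 (wdSeries_radius x))
  have h2 := h.mono h0 (wdSeries_radius x)
  apply h2.congr
  show Set.EqOn _ _ _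
  intro y hy
  rw [EMetric.mem_ball, edist_zero_right] at hy
  have hy' : |y| < 1 := by
    have h3 := hy
    rw [← ENNReal.ofReal_one] at h3
    simpa [Real.enorm_eq_ofReal_abs, ENNReal.ofReal_lt_ofReal_iff] using h3
  simpa using (wdSeries_sum x hy')

lemma word_eq_of_wordVal_eq {x y : ℕ → Bool} {a : ℝ} (ha1 : 1/2 ≤ a) (ha2 : a < 1)
    (h : ∀ q ∈ Set.Ioo a (1:ℝ), wordVal q x = wordVal q y) : x = y := by
  set f := fun q => wordVal q x with hf
  set g := fun q => wordVal q y with hg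
  have hfps := hasFPS x
  have hgps := hasFPS y
  set U : Set ℝ := Metric.eball (0:ℝ) 1 with hU
  have hUball : U = Metric.ball (0:ℝ) 1 := by
    rw [hU]
    have h := Metric.emetric_ball_nnreal (x := (0:ℝ)) (ε := 1)
    simpa using h
  have hfa : AnalyticOnNhd ℝ f U := fun z hz => hfps.analyticAt_of_mem hz
  have hga : AnalyticOnNhd ℝ g U := fun z hz => hgps.analyticAt_of_mem hz
  have hpre : IsPreconnected U := by
    rw [hUball]
    exact (convex_ball (0:ℝ) 1).isPreconnected
  set z₀ : ℝ := (a + 1) / 2 with hz₀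
  have hz₀U : z₀ ∈ U := by
    rw [hUball, Metric.mem_ball, dist_zero_right, Real.norm_eq_abs, abs_of_pos (by linarith)]
    linarith
  have hev : f =ᶠ[nhds z₀] g := by
    apply Filter.eventually_of_mem (isOpen_Ioo.mem_nhds (show z₀ ∈ Set.Ioo a 1 by
      constructor <;> [skip; skip] <;> [linarith; linarith]))
    intro q hq
    exact h q hq
  have heq : Set.EqOn f g U :=
    hfa.eqOn_of_preconnected_of_eventuallyEq hga hpre hz₀U hev
  have h0U : (0:ℝ) ∈ U := by
    rw [hUball]; simp
  have hev0 : f =ᶠ[nhds 0] g := by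
    apply Filter.eventually_of_mem (EMetric.isOpen_ball.mem_nhds h0U)
    exact heq
  have hfat : HasFPowerSeriesAt f (wdSeries x) 0 := ⟨1, hfps⟩
  have hgat : HasFPowerSeriesAt g (wdSeries y) 0 := ⟨1, hgps⟩
  have hfat2 : HasFPowerSeriesAt f (wdSeries y) 0 := hgat.congr hev0.symm
  have hps : wdSeries x = wdSeries y := hfat.eq_formalMultilinearSeries hfat2
  funext n
  have hcf := congr_fun hps n
  have h2 := congr_arg (fun (c : ContinuousMultilinearMap ℝ (fun _ : Fin n => ℝ) ℝ) =>
    c (fun _ => 1)) hcf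
  rcases hx : x n with _|_ <;> rcases hy : y n with _|_ <;>
    simp only [wdSeries, hx, hy, if_true, if_false, Bool.false_eq_true,
      ContinuousMultilinearMap.zero_apply,
      ContinuousMultilinearMap.mkPiAlgebraFin_apply, List.ofFn_const,
      List.prod_replicate, one_pow] at h2 <;>
    first
    | rfl
    | (exfalso; norm_num at h2)

/-! ### Bridge between `genFun` and `wordVal` -/

lemma genFun_eq_wordVal (S : Set ℕ) (q : ℝ) :
    genFun S q = wordVal q (fun n => decide (n ∈ S)) := by
  rw [genFun, wordVal, tsum_subtype S (fun n => q ^ n)]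
  congr 1
  funext n
  rw [Set.indicator_apply]
  by_cases h : n ∈ S <;> simp [h]

end PackingAux

open PackingAux

theorem germMaximal_translationSet_eventuallyPeriodic (B : Set ℕ)
    (hB : B.Finite) (hBne : B.Nonempty) (Tstar : Set ℕ)
    (hT : IsTranslationSet B Tstar)
    (hmax : ¬ ∃ T : Set ℕ, IsTranslationSet B T ∧ GermLE Tstar T ∧ ¬ GermLE T Tstar) :
    EventuallyPeriodic Tstar := by
  set Bf := hB.toFinset with hBf
  have hBfne : Bf.Nonempty := by
    rw [hBf]
    exact (Set.Finite.toFinset_nonempty hB).mpr hBne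
  set W := Bf.max' hBfne with hW
  set F := ((Bf ×ˢ Bf).image fun p : ℕ × ℕ => p.1 - p.2).filter (fun d => 0 < d) with hFdef
  have hF : ∀ d ∈ F, 0 < d ∧ d ≤ W + 1 := by
    intro d hd
    rw [hFdef, Finset.mem_filter] at hd
    obtain ⟨hd1, hd2⟩ := hd
    refine ⟨hd2, ?_⟩
    rw [Finset.mem_image] at hd1
    obtain ⟨p, hp, rfl⟩ := hd1
    rw [Finset.mem_product] at hp
    have := Bf.le_max' p.1 hp.1
    omega
  have hFmem : ∀ d, 0 < d → ((d ∈ F) ↔ ∃ b1 ∈ B, ∃ b2 ∈ B, b2 + d = b1) := by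
    intro d hd
    rw [hFdef, Finset.mem_filter, Finset.mem_image]
    constructor
    · rintro ⟨⟨p, hp, rfl⟩, hpos⟩
      rw [Finset.mem_product] at hp
      exact ⟨p.1, hB.mem_toFinset.mp hp.1, p.2, hB.mem_toFinset.mp hp.2, by omega⟩
    · rintro ⟨b1, hb1, b2, hb2, hsum⟩
      refine ⟨⟨(b1, b2), ?_, by omega⟩, hd⟩
      rw [Finset.mem_product]
      exact ⟨hB.mem_toFinset.mpr hb1, hB.mem_toFinset.mpr hb2⟩
  set xT : ℕ → Bool := fun n => decide (n ∈ Tstar) with hxT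
  have hvT : ValidFrom F W (sInit W) xT := by
    rw [validFrom_sInit_iff]
    intro m d hd hm hmd
    have hd0 : 0 < d := (hF d hd).1
    obtain ⟨b1, hb1, b2, hb2, hsum⟩ := (hFmem d hd0).mp hd
    have hmT : m ∈ Tstar := by
      rw [hxT] at hm; simpa using hm
    have hmdT : m + d ∈ Tstar := by
      rw [hxT] at hmd; simpa using hmd
    have hempty := hT m hmT (m + d) hmdT (by omega)
    have hmem : (b1 + m) ∈ ((fun b => b + m) '' B) ∩ ((fun b => b + (m + d)) '' B) :=
      ⟨⟨b1, hb1, rfl⟩, ⟨b2, hb2, by show b2 + (m + d) = b1 + m; omega⟩⟩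
    rw [hempty] at hmem
    exact hmem
  obtain ⟨π, q0, hq01, hq02, hVq⟩ := exists_blackwell F W hF
  set xP := runW F W π with hxP
  set T' : Set ℕ := {n | xP n = true} with hT'
  have hgenP : ∀ q : ℝ, genFun T' q = wordVal q xP := by
    intro q
    rw [genFun_eq_wordVal T' q]
    congr 1
    funext n
    have hdd : @decide (n ∈ T') (Classical.propDecidable _) = decide (xP n = true) :=
      decide_eq_decide.mpr Iff.rfl
    rw [hdd]
    cases h : xP n <;> simp [h]
  have hvalidP : ∀ m d, d ∈ F → xP m = true → xP (m + d) = true → False := by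
    have h := valid_run F W hF π
    rw [validFrom_sInit_iff] at h
    exact h
  have hTrans' : IsTranslationSet B T' := by
    intro m hm n hn hmn
    rw [Set.eq_empty_iff_forall_notMem]
    rintro y ⟨⟨b, hb, hbm⟩, ⟨b', hb', hbn⟩⟩
    simp only at hbm hbn
    rcases Ne.lt_or_gt hmn with h | h
    · have hd0 : 0 < n - m := by omega
      have hdF : (n - m) ∈ F := (hFmem _ hd0).mpr ⟨b, hb, b', hb', by omega⟩
      refine hvalidP m (n - m) hdF ?_ ?_
      · exact hm
      · rw [show m + (n - m) = n from by omega]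
        exact hn
    · have hd0 : 0 < m - n := by omega
      have hdF : (m - n) ∈ F := (hFmem _ hd0).mpr ⟨b', hb', b, hb, by omega⟩
      refine hvalidP n (m - n) hdF ?_ ?_
      · exact hn
      · rw [show n + (m - n) = m from by omega]
        exact hm
  have hchain : ∀ q ∈ Set.Ioo q0 (1:ℝ), genFun Tstar q ≤ genFun T' q := by
    intro q hq
    have hq0' : (0:ℝ) ≤ q := by have := hq.1; linarith
    have hq1' : q < 1 := hq.2
    rw [genFun_eq_wordVal Tstar q, hgenP q]
    calc wordVal q (fun n => decide (n ∈ Tstar)) ≤ V F W q (sInit W) :=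
          wordVal_le_V F W hq0' hq1' hvT
      _ = wordVal q xP := hVq q hq
  have hG1 : GermLE Tstar T' := by
    refine ⟨1 - q0, by linarith, ?_⟩
    intro q hq
    apply hchain
    rw [show (1:ℝ) - (1 - q0) = q0 from by ring] at hq
    exact hq
  have hG2 : GermLE T' Tstar := by
    by_contra hng
    exact hmax ⟨T', hTrans', hG1, hng⟩
  obtain ⟨ε', hε', hle⟩ := hG2
  set a : ℝ := max q0 (1 - ε') with ha
  have ha1 : 1/2 ≤ a := le_trans hq01 (le_max_left _ _)
  have ha2 : a < 1 := by
    rw [ha]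
    apply max_lt hq02
    linarith
  have heqv : ∀ q ∈ Set.Ioo a (1:ℝ), wordVal q xT = wordVal q xP := by
    intro q hq
    have hq1 : q ∈ Set.Ioo q0 (1:ℝ) :=
      ⟨lt_of_le_of_lt (le_max_left _ _) hq.1, hq.2⟩
    have hq2 : q ∈ Set.Ioo (1 - ε') (1:ℝ) :=
      ⟨lt_of_le_of_lt (le_max_right _ _) hq.1, hq.2⟩
    have h1 := hchain q hq1
    have h2 := hle q hq2
    have e1 : genFun Tstar q = wordVal q xT := genFun_eq_wordVal Tstar q
    have e2 := hgenP q
    linarith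
  have hword : xT = xP := word_eq_of_wordVal_eq ha1 ha2 heqv
  have hset : Tstar = T' := by
    ext n
    have hcf : xT n = xP n := congr_fun hword n
    have hx1 : (n ∈ Tstar) ↔ xT n = true := by
      constructor
      · intro hn; exact decide_eq_true hn
      · intro hn; exact of_decide_eq_true hn
    rw [hx1, hcf]
    exact Iff.rfl
  rw [hset]
  obtain ⟨N, d, hd, hper⟩ := run_ep F W π
  refine ⟨N, d, by omega, ?_⟩
  intro n hn
  have h' : xP (n + d) = xP n := hper n hn
  show xP n = true ↔ xP (n + d) = true
  rw [h']
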